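/- Let G be a group and φ an automorphism of G, and suppose the semidirect product Γ = G ⋊_φ ℤ is conjugacy separable. Then G is φ-conjugacy separable. Consequently, if a class of conjugacy separable groups is closed under taking semidirect products by ℤ, then every group in this class is strongly twisted conjugacy separable. -/

import Mathlib

/-- `x` and `y` are `φ`-conjugate (twisted conjugate): `y = g * x * φ(g)⁻¹` for some `g`. -/
def TwistedConj {G : Type*} [Group G] (φ : MulAut G) (x y : G) : Prop :=
  ∃ g : G, y = g * x * (φ g)⁻¹

/-- A finite quotient of `G` respecting `φ` that separates the elements `x` and `y`. -/
inductive SepWitness {G : Type*} [Group G] (φ : MulAut G) (x y : G) : Prop where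
  | intro (K : Type) [grp : Group K] [fin : Finite K] (φK : MulAut K) (F : G →* K)
      (surj : Function.Surjective F) (comm : ∀ g : G, F (φ g) = φK (F g))
      (sep : ¬ TwistedConj φK (F x) (F y)) : SepWitness φ x y

/-- `G` is `φ`-conjugacy separable. -/
def PhiConjSep {G : Type*} [Group G] (φ : MulAut G) : Prop :=
  ∀ x y : G, ¬ TwistedConj φ x y → SepWitness φ x y

/-- A finite quotient of `G` separating the (ordinary) conjugacy classes of `x` and `y`. -/
inductive ConjSepWitness (G : Type*) [Group G] (x y : G) : Prop where
  | intro (K : Type) [grp : Group K] [fin : Finite K] (F : G →* K)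
      (surj : Function.Surjective F) (sep : ¬ IsConj (F x) (F y)) : ConjSepWitness G x y

/-- `G` is conjugacy separable: any pair of non-conjugate elements of `G` have
non-conjugate images in some finite quotient of `G`. -/
def ConjSep (G : Type*) [Group G] : Prop :=
  ∀ x y : G, ¬ IsConj x y → ConjSepWitness G x y

/-- The semidirect product `Γ = G ⋊_φ ℤ`, where the generator `t` of the `ℤ`-factor
acts on `G` by `t g t⁻¹ = φ(g)`. -/
abbrev Gamma (G : Type*) [Group G] (φ : MulAut G) :=
  G ⋊[zpowersHom (MulAut G) φ] Multiplicative ℤ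

section Aux
variable {G : Type*} [Group G] (φ : MulAut G)

lemma tc_refl (x : G) : TwistedConj φ x x := ⟨1, by simp⟩

lemma tc_trans {x y z : G} (h1 : TwistedConj φ x y) (h2 : TwistedConj φ y z) :
    TwistedConj φ x z := by
  obtain ⟨g, rfl⟩ := h1
  obtain ⟨h, rfl⟩ := h2
  exact ⟨h * g, by simp [mul_assoc]⟩

lemma tc_phi (x : G) : TwistedConj φ x (φ x) := ⟨x⁻¹, by simp⟩

lemma tc_phi_inv (x : G) : TwistedConj φ x (φ⁻¹ x) :=
  ⟨φ⁻¹ x, by simp⟩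

lemma tc_zpow (x : G) : ∀ n : ℤ, TwistedConj φ x ((φ ^ n) x) := by
  intro n
  induction n using Int.induction_on with
  | zero => simpa using tc_refl φ x
  | succ n ih =>
      have h : (φ ^ ((n : ℤ) + 1)) x = φ ((φ ^ (n : ℤ)) x) := by
        rw [show (n:ℤ)+1 = 1+(n:ℤ) by ring, zpow_add, zpow_one]; rfl
      rw [h]
      exact tc_trans φ ih (tc_phi φ _)
  | pred n ih =>
      have h : (φ ^ (-(n : ℤ) - 1)) x = φ⁻¹ ((φ ^ (-(n : ℤ))) x) := by
        rw [show -(n:ℤ)-1 = -1 + -(n:ℤ) by ring, zpow_add, zpow_neg_one]; rfl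
      rw [h]
      exact tc_trans φ ih (tc_phi_inv φ _)

open SemidirectProduct in
lemma tc_key {x y : G}
    (h : IsConj (inl x * inr (Multiplicative.ofAdd 1) : Gamma G φ)
      (inl y * inr (Multiplicative.ofAdd 1))) : TwistedConj φ x y := by
  rw [isConj_iff] at h
  obtain ⟨⟨g, m⟩, hc⟩ := h
  have hl := congrArg SemidirectProduct.left hc
  simp [SemidirectProduct.mul_left, SemidirectProduct.mul_right,
    SemidirectProduct.inv_left, SemidirectProduct.inv_right, mul_assoc] at hl
  set n := Multiplicative.toAdd m with hn
  have hcomm : (φ ^ n) (φ ((φ ^ n)⁻¹ g)) = φ g := by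
    rw [← MulAut.mul_apply, ← MulAut.mul_apply]
    congr 1
    group
  rw [show (MulEquiv.symm (φ ^ n)) = (φ ^ n)⁻¹ from rfl, hcomm] at hl
  exact tc_trans φ (tc_zpow φ x n) ⟨g, by rw [← hl]; simp [mul_assoc]⟩

open SemidirectProduct in
lemma inl_phi_eq (g : G) : (inl (φ g) : Gamma G φ) =
    inr (Multiplicative.ofAdd 1) * inl g * (inr (Multiplicative.ofAdd 1))⁻¹ := by
  have := inl_aut (φ := zpowersHom (MulAut G) φ) (Multiplicative.ofAdd 1) g
  simpa using this

end Aux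

open SemidirectProduct in
/-- If the semidirect product `Γ = G ⋊_φ ℤ` is conjugacy separable then `G` is
`φ`-conjugacy separable. Consequently, if a class of conjugacy separable groups is
closed under taking semidirect products by `ℤ`, then every group in this class is
strongly twisted conjugacy separable (i.e. `φ`-conjugacy separable for every
automorphism `φ`). -/
theorem phiConjSep_of_conjSep_semidirect :
    (∀ (G : Type u) [Group G] (φ : MulAut G), ConjSep (Gamma G φ) → PhiConjSep φ) ∧
    (∀ P : (H : Type u) → [Group H] → Prop,
      (∀ (H : Type u) [Group H], P H → ConjSep H) →
      (∀ (H : Type u) [Group H] (ψ : MulAut H), P H → P (Gamma H ψ)) →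
      ∀ (H : Type u) [Group H], P H → ∀ ψ : MulAut H, PhiConjSep ψ) := by
  have main : ∀ (G : Type u) [Group G] (φ : MulAut G), ConjSep (Gamma G φ) → PhiConjSep φ := by
    intro G _ φ hΓ x y hxy
    set s : Multiplicative ℤ := Multiplicative.ofAdd 1 with hs
    set t : Gamma G φ := inr s with ht
    have hnc : ¬ IsConj (inl x * t : Gamma G φ) (inl y * t) := fun h => hxy (tc_key φ h)
    obtain h := hΓ _ _ hnc
    cases h with
    | @intro K grp fin F surj sep =>
      let ι : G →* Gamma G φ := inl
      let F' : G →* K := F.comp ι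
      have hFphi : ∀ g : G, F' (φ g) = F t * F' g * (F t)⁻¹ := by
        intro g
        show F (inl (φ g)) = F t * F (inl g) * (F t)⁻¹
        rw [inl_phi_eq]
        simp [ht, hs]
      have hFphi_inv : ∀ g : G, F' (φ⁻¹ g) = (F t)⁻¹ * F' g * F t := by
        intro g
        have := hFphi (φ⁻¹ g)
        simp only [MulAut.apply_inv_self] at this
        rw [this]
        group
      let K₀ : Subgroup K := F'.range
      have memK : ∀ k : K₀, F t * (k : K) * (F t)⁻¹ ∈ K₀ := by
        rintro ⟨k, g, rfl⟩
        exact ⟨φ g, (hFphi g).symm ▸ rfl⟩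
      have memK' : ∀ k : K₀, (F t)⁻¹ * (k : K) * F t ∈ K₀ := by
        rintro ⟨k, g, rfl⟩
        exact ⟨φ⁻¹ g, (hFphi_inv g).symm ▸ rfl⟩
      let e : MulAut K₀ :=
        { toFun := fun k => ⟨F t * (k : K) * (F t)⁻¹, memK k⟩
          invFun := fun k => ⟨(F t)⁻¹ * (k : K) * F t, memK' k⟩
          left_inv := fun k => Subtype.ext (by simp [mul_assoc])
          right_inv := fun k => Subtype.ext (by simp [mul_assoc])
          map_mul' := fun a b => Subtype.ext (by
            show F t * ((a : K) * (b : K)) * (F t)⁻¹ =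
              (F t * (a : K) * (F t)⁻¹) * (F t * (b : K) * (F t)⁻¹)
            group) }
      let F'' : G →* K₀ := F'.rangeRestrict
      refine SepWitness.intro K₀ e F'' F'.rangeRestrict_surjective ?_ ?_
      · intro g
        exact Subtype.ext (hFphi g)
      · rintro ⟨⟨k, g, hg⟩, hk⟩
        apply sep
        rw [isConj_iff]
        refine ⟨F (inl g), ?_⟩
        have hk' : F' y = k * F' x * (F t * k * (F t)⁻¹)⁻¹ := congrArg Subtype.val hk
        subst hg
        have hk2 : F (inl y) = F (inl g) * F (inl x) * (F t * F (inl g) * (F t)⁻¹)⁻¹ := hk'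
        simp only [map_mul]
        rw [hk2]
        group
  exact ⟨main, fun P hCS hcl H _ hP ψ => main H ψ (hCS _ (hcl H ψ hP))⟩
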